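/- Let τ>0 and a ∈ [0,1). Then every complex number λ satisfying λ + 1 = a·e^{−λτ} has strictly negative real part: Re(λ) < 0. -/

import Mathlib

open Set

/-- All roots of the characteristic equation `λ + 1 = a·e^{−λτ}`, with `τ > 0`
and `a ∈ [0,1)`, have strictly negative real part. -/
theorem stmt_9 (τ a : ℝ) (hτ : 0 < τ) (ha : a ∈ Ico (0:ℝ) 1)
    (z : ℂ) (hz : z + 1 = (a : ℂ) * Complex.exp (-z * (τ : ℂ))) : z.re < 0 := by
  by_contra h
  push_neg at h
  obtain ⟨ha0, ha1⟩ := ha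
  have h1 : (1:ℝ) ≤ ‖z + 1‖ := by
    calc (1:ℝ) ≤ (z + 1).re := by simp [Complex.add_re]; linarith
    _ ≤ ‖z + 1‖ := Complex.re_le_norm _
  have h2 : ‖(a : ℂ) * Complex.exp (-z * (τ : ℂ))‖ < 1 := by
    rw [norm_mul, Complex.norm_exp]
    have hre : (-z * (τ : ℂ)).re = -z.re * τ := by simp
    rw [hre]
    have : Real.exp (-z.re * τ) ≤ 1 := by
      rw [Real.exp_le_one_iff]
      nlinarith
    calc ‖(a : ℂ)‖ * Real.exp (-z.re * τ)
        ≤ ‖(a : ℂ)‖ * 1 := by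
          apply mul_le_mul_of_nonneg_left this (norm_nonneg _)
      _ = a := by simp [Complex.norm_real, abs_of_nonneg ha0]
      _ < 1 := ha1
  rw [hz] at h1
  linarith
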